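/- Total decomposition of unit uncertainty: for n inputs, β^k_1 + β^k_{2|1} + β^k_{3|(1,2)} + ... + β^k_{n|(1,...,n−1)} = β^k_{(1,...,n)} = 1, assuming the output is a deterministic function of all inputs. This holds for any ordering of learning the input variables. -/

import Mathlib

open MeasureTheory
open scoped RealInnerProductSpace

section Aux

variable {α H : Type*} {m m0 : MeasurableSpace α} {μ : Measure α}
  [NormedAddCommGroup H] [InnerProductSpace ℝ H] [CompleteSpace H]

lemma my_condexp_ae_eq_condexpL2 [IsFiniteMeasure μ] (hm : m ≤ m0) {f : α → H}
    (hf : MemLp f 2 μ) :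
    μ[f|m] =ᵐ[μ] (condExpL2 H ℝ hm (hf.toLp f) : α →₂[μ] H) := by
  refine (ae_eq_condExp_of_forall_setIntegral_eq hm (hf.integrable one_le_two)
    (fun s _ hμs => integrableOn_condExpL2_of_measure_ne_top hm hμs.ne _)
    (fun s hs hμs => ?_) (aestronglyMeasurable_condExpL2 hm _)).symm
  rw [integral_condExpL2_eq hm (hf.toLp f) hs hμs.ne]
  exact setIntegral_congr_ae (hm s hs) (hf.coeFn_toLp.mono fun x hx _ => hx)

omit [CompleteSpace H] in
lemma my_integral_norm_sq_eq (u : α →₂[μ] H) : ∫ a, ‖u a‖ ^ 2 ∂μ = ‖u‖ ^ 2 := by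
  rw [← real_inner_self_eq_norm_sq, L2.inner_def]
  simp_rw [real_inner_self_eq_norm_sq]

lemma my_telescope_sq {E : Type*} [NormedAddCommGroup E] [InnerProductSpace ℝ E]
    (P : ℕ → E) (horth : ∀ N, ⟪P (N + 1) - P N, P N - P 0⟫ = 0) (N : ℕ) :
    ∑ j ∈ Finset.range N, ‖P (j + 1) - P j‖ ^ 2 = ‖P N - P 0‖ ^ 2 := by
  induction N with
  | zero => simp
  | succ N ih =>
    rw [Finset.sum_range_succ, ih, show P (N + 1) - P 0 = (P (N + 1) - P N) + (P N - P 0) by abel,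
      norm_add_sq_real, horth N]
    ring

end Aux

theorem total_decomposition_unit_uncertainty
    {Ω H : Type*} [m0 : MeasurableSpace Ω]
    [NormedAddCommGroup H] [InnerProductSpace ℝ H] [CompleteSpace H]
    (μ : Measure Ω) [IsProbabilityMeasure μ]
    (n : ℕ) (m : Fin n → MeasurableSpace Ω) (hm : ∀ i, m i ≤ m0)
    (Z : Ω → H) (hZ : Integrable Z μ)
    (hZ2 : Integrable (fun ω => ‖Z ω‖ ^ 2) μ)
    (hdet : StronglyMeasurable[⨆ i, m i] Z)
    (hden : 0 < (∫ ω, ‖Z ω‖ ^ 2 ∂μ) - ‖∫ ω', Z ω' ∂μ‖ ^ 2)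
    (π : Equiv.Perm (Fin n)) :
    (∑ j ∈ Finset.range n,
        (∫ ω, ‖(μ[Z| ⨆ (i : Fin n) (_ : (π.symm i : ℕ) < j + 1), m i]) ω
              - (μ[Z| ⨆ (i : Fin n) (_ : (π.symm i : ℕ) < j), m i]) ω‖ ^ 2 ∂μ) /
          ((∫ ω, ‖Z ω‖ ^ 2 ∂μ) - ‖∫ ω', Z ω' ∂μ‖ ^ 2))
      = (∫ ω, ‖(μ[Z| ⨆ i, m i]) ω - ∫ ω', Z ω' ∂μ‖ ^ 2 ∂μ) /
          ((∫ ω, ‖Z ω‖ ^ 2 ∂μ) - ‖∫ ω', Z ω' ∂μ‖ ^ 2) ∧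
    (∫ ω, ‖(μ[Z| ⨆ i, m i]) ω - ∫ ω', Z ω' ∂μ‖ ^ 2 ∂μ) /
        ((∫ ω, ‖Z ω‖ ^ 2 ∂μ) - ‖∫ ω', Z ω' ∂μ‖ ^ 2) = 1 := by
  have hZm : MemLp Z 2 μ := (memLp_two_iff_integrable_sq_norm hZ.aestronglyMeasurable).mpr hZ2
  set c : H := ∫ ω', Z ω' ∂μ with hc
  have hsup : (⨆ i, m i) ≤ m0 := iSup_le hm
  have hZeq : μ[Z| ⨆ i, m i] = Z := condExp_of_stronglyMeasurable hsup hdet hZ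
  -- variance identity
  have hvar : ∫ ω, ‖Z ω - c‖ ^ 2 ∂μ = (∫ ω, ‖Z ω‖ ^ 2 ∂μ) - ‖c‖ ^ 2 := by
    have h1 : Integrable (fun ω => (⟪c, Z ω⟫ : ℝ)) μ := hZ.const_inner c
    calc ∫ ω, ‖Z ω - c‖ ^ 2 ∂μ
        = ∫ ω, (‖Z ω‖ ^ 2 - 2 * ⟪c, Z ω⟫ + ‖c‖ ^ 2) ∂μ := by
          refine integral_congr_ae (Filter.Eventually.of_forall fun ω => ?_)
          dsimp only
          rw [norm_sub_sq_real, real_inner_comm]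
      _ = (∫ ω, (‖Z ω‖ ^ 2 - 2 * ⟪c, Z ω⟫) ∂μ) + ‖c‖ ^ 2 := by
          have hint : Integrable (fun ω => ‖Z ω‖ ^ 2 - 2 * ⟪c, Z ω⟫) μ := hZ2.sub (h1.const_mul 2)
          rw [integral_add hint (integrable_const _), integral_const]
          simp
      _ = (∫ ω, ‖Z ω‖ ^ 2 ∂μ) - 2 * ⟪c, c⟫ + ‖c‖ ^ 2 := by
          have hint : Integrable (fun ω => 2 * ⟪c, Z ω⟫) μ := h1.const_mul 2
          rw [integral_sub hZ2 hint, integral_const_mul, integral_inner hZ, ← hc]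
      _ = (∫ ω, ‖Z ω‖ ^ 2 ∂μ) - ‖c‖ ^ 2 := by
          rw [real_inner_self_eq_norm_sq]; ring
  have hnum : ∫ ω, ‖(μ[Z| ⨆ i, m i]) ω - c‖ ^ 2 ∂μ
      = (∫ ω, ‖Z ω‖ ^ 2 ∂μ) - ‖c‖ ^ 2 := by rw [hZeq, hvar]
  constructor
  · -- the filtration
    set M : ℕ → MeasurableSpace Ω := fun j => ⨆ (i : Fin n) (_ : (π.symm i : ℕ) < j), m i with hM
    have hM_le : ∀ j, M j ≤ m0 := fun j => iSup_le fun i => iSup_le fun _ => hm i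
    have hMmono : ∀ {a b : ℕ}, a ≤ b → M a ≤ M b := fun {a b} hab =>
      iSup_mono fun i => iSup_le fun h => le_iSup_of_le (lt_of_lt_of_le h hab) le_rfl
    have hM0 : M 0 = ⊥ := by simp [hM]
    have hMn : M n = ⨆ i, m i := by
      refine le_antisymm (iSup_le fun i => iSup_le fun _ => le_iSup m i) ?_
      exact iSup_mono fun i => le_iSup_of_le (π.symm i).is_lt le_rfl
    set F : Ω →₂[μ] H := hZm.toLp Z with hF
    set P : ℕ → (Ω →₂[μ] H) := fun j => (condExpL2 H ℝ (hM_le j) F : Ω →₂[μ] H) with hP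
    have hPmeas : ∀ j, AEStronglyMeasurable[M j] (P j : Ω → H) μ := fun j =>
      aestronglyMeasurable_condExpL2 (hM_le j) F
    -- orthogonality of increments
    have horth : ∀ N, ⟪P (N + 1) - P N, P N - P 0⟫ = 0 := by
      intro N
      have hV : AEStronglyMeasurable[M N] ((P N - P 0 : Ω →₂[μ] H) : Ω → H) μ := by
        refine AEStronglyMeasurable.congr
          ((hPmeas N).sub ((hPmeas 0).mono (hMmono (Nat.zero_le N))))
          (Lp.coeFn_sub (P N) (P 0)).symm
      rw [inner_sub_left,
        inner_condExpL2_eq_inner_fun (hM_le (N + 1)) F _ (hV.mono (hMmono (Nat.le_succ N))),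
        inner_condExpL2_eq_inner_fun (hM_le N) F _ hV, sub_self]
    -- bridge : each summand numerator equals an Lp norm
    have hbridge : ∀ a b : ℕ,
        ∫ ω, ‖(μ[Z| M a]) ω - (μ[Z| M b]) ω‖ ^ 2 ∂μ = ‖P a - P b‖ ^ 2 := by
      intro a b
      rw [← my_integral_norm_sq_eq (P a - P b)]
      refine integral_congr_ae ?_
      filter_upwards [Lp.coeFn_sub (P a) (P b),
        my_condexp_ae_eq_condexpL2 (hM_le a) hZm,
        my_condexp_ae_eq_condexpL2 (hM_le b) hZm] with ω h1 h2 h3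
      rw [h1, Pi.sub_apply, h2, h3]
    have hsum : ∑ j ∈ Finset.range n,
        ∫ ω, ‖(μ[Z| M (j + 1)]) ω - (μ[Z| M j]) ω‖ ^ 2 ∂μ = ‖P n - P 0‖ ^ 2 := by
      simp_rw [hbridge]
      exact my_telescope_sq P horth n
    have hlast : ‖P n - P 0‖ ^ 2 = ∫ ω, ‖(μ[Z| ⨆ i, m i]) ω - c‖ ^ 2 ∂μ := by
      rw [← hbridge n 0, hMn, hM0, condExp_bot]
    rw [← Finset.sum_div, hsum, hlast]
  · rw [hnum]
    exact div_self hden.ne'
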